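/- Under the assumptions of the previous coercivity lemma, for any exponent q with 1 ≤ q ≤ γ, there exists a constant c > 0 depending on a, b, q such that |ρ − r|^q 1_{ρ ∉ [a/2, 2b]} ≤ c · E(ρ|r) for all ρ ≥ 0 and r ∈ [a,b]. -/

import Mathlib

open intervalIntegral Set

lemma myUIccIoi {x y : ℝ} (hx : 0 < x) (hy : 0 < y) : Set.uIcc x y ⊆ Set.Ioi 0 := by
  rw [Set.uIcc] at *
  intro z hz
  exact lt_of_lt_of_le (lt_inf_iff.mpr ⟨hx, hy⟩) hz.1

lemma myContInvSq : ContinuousOn (fun z : ℝ => (z ^ 2)⁻¹) (Set.Ioi 0) := by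
  apply ContinuousOn.inv₀ (continuousOn_pow 2)
  intro z hz
  exact pow_ne_zero 2 (ne_of_gt hz)

lemma myIntegralInvSq {x y : ℝ} (hx : 0 < x) (hy : 0 < y) :
    ∫ z in x..y, (z ^ 2)⁻¹ = x⁻¹ - y⁻¹ := by
  have h : ∀ z ∈ Set.uIcc x y, HasDerivAt (fun t : ℝ => -t⁻¹) ((z ^ 2)⁻¹) z := by
    intro z hz
    have hz0 : z ≠ 0 := ne_of_gt (myUIccIoi hx hy hz)
    have h' := (hasDerivAt_inv hz0).neg
    rw [neg_neg] at h'
    exact h'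
  have hint : IntervalIntegrable (fun z : ℝ => (z ^ 2)⁻¹) MeasureTheory.volume x y :=
    (myContInvSq.mono (myUIccIoi hx hy)).intervalIntegrable
  have := intervalIntegral.integral_eq_sub_of_hasDerivAt h hint
  simp at this
  linarith

lemma myDerivH (p : ℝ → ℝ) (hpc : ContinuousOn p (Set.Ioi 0))
    (H : ℝ → ℝ) (hH : ∀ ρ, H ρ = ρ * ∫ z in (1:ℝ)..ρ, p z / z ^ 2)
    {r : ℝ} (hr : 0 < r) :
    deriv H r = (∫ z in (1:ℝ)..r, p z / z ^ 2) + p r / r := by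
  have hg : ContinuousOn (fun z : ℝ => p z / z ^ 2) (Set.Ioi 0) :=
    hpc.div (continuousOn_pow 2) (fun z hz => pow_ne_zero 2 (ne_of_gt hz))
  have hint : IntervalIntegrable (fun z : ℝ => p z / z ^ 2) MeasureTheory.volume 1 r :=
    (hg.mono (myUIccIoi one_pos hr)).intervalIntegrable
  have hmeas : StronglyMeasurableAtFilter (fun z : ℝ => p z / z ^ 2) (nhds r) :=
    hg.stronglyMeasurableAtFilter isOpen_Ioi r hr
  have hca : ContinuousAt (fun z : ℝ => p z / z ^ 2) r :=
    hg.continuousAt (Ioi_mem_nhds hr)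
  have hF : HasDerivAt (fun u => ∫ z in (1:ℝ)..u, p z / z ^ 2) (p r / r ^ 2) r :=
    intervalIntegral.integral_hasDerivAt_right hint hmeas hca
  have hHd : HasDerivAt H ((∫ z in (1:ℝ)..r, p z / z ^ 2) + r * (p r / r ^ 2)) r := by
    have : H = fun u => u * ∫ z in (1:ℝ)..u, p z / z ^ 2 := funext hH
    rw [this]
    have h' := (hasDerivAt_id' r).mul hF
    rw [one_mul] at h'
    exact h'
  rw [hHd.deriv]
  have : r * (p r / r ^ 2) = p r / r := by
    field_simp
  rw [this]

lemma myEformula (p : ℝ → ℝ) (hpc : ContinuousOn p (Set.Ioi 0))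
    (H : ℝ → ℝ) (hH : ∀ ρ, H ρ = ρ * ∫ z in (1:ℝ)..ρ, p z / z ^ 2)
    (E : ℝ → ℝ → ℝ)
    (hE : ∀ ρ r, E ρ r = H ρ - deriv H r * (ρ - r) - H r)
    {ρ r : ℝ} (hρ : 0 < ρ) (hr : 0 < r) :
    E ρ r = ρ * ∫ z in r..ρ, (p z - p r) / z ^ 2 := by
  have hg : ContinuousOn (fun z : ℝ => p z / z ^ 2) (Set.Ioi 0) :=
    hpc.div (continuousOn_pow 2) (fun z hz => pow_ne_zero 2 (ne_of_gt hz))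
  have hint : ∀ x y : ℝ, 0 < x → 0 < y →
      IntervalIntegrable (fun z : ℝ => p z / z ^ 2) MeasureTheory.volume x y :=
    fun x y hx hy => (hg.mono (myUIccIoi hx hy)).intervalIntegrable
  have hintq : IntervalIntegrable (fun z : ℝ => (z ^ 2)⁻¹) MeasureTheory.volume r ρ :=
    (myContInvSq.mono (myUIccIoi hr hρ)).intervalIntegrable
  have h1 : ∫ z in r..ρ, (p z - p r) / z ^ 2
      = (∫ z in r..ρ, p z / z ^ 2) - p r * ∫ z in r..ρ, (z ^ 2)⁻¹ := by
    rw [← intervalIntegral.integral_const_mul,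
      ← intervalIntegral.integral_sub (hint r ρ hr hρ) (hintq.const_mul (p r))]
    apply intervalIntegral.integral_congr
    intro z _
    ring
  have h2 : (∫ z in (1:ℝ)..ρ, p z / z ^ 2) - (∫ z in (1:ℝ)..r, p z / z ^ 2)
      = ∫ z in r..ρ, p z / z ^ 2 :=
    intervalIntegral.integral_interval_sub_left (hint 1 ρ one_pos hρ) (hint 1 r one_pos hr)
  rw [hE, hH ρ, hH r, myDerivH p hpc H hH hr, h1, myIntegralInvSq hr hρ, ← h2]
  field_simp
  ring

lemma myEformula' (p : ℝ → ℝ) (hpc : ContinuousOn p (Set.Ioi 0))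
    (H : ℝ → ℝ) (hH : ∀ ρ, H ρ = ρ * ∫ z in (1:ℝ)..ρ, p z / z ^ 2)
    (E : ℝ → ℝ → ℝ)
    (hE : ∀ ρ r, E ρ r = H ρ - deriv H r * (ρ - r) - H r)
    {ρ r : ℝ} (hρ : 0 < ρ) (hr : 0 < r) :
    E ρ r = ρ * ∫ z in ρ..r, (p r - p z) / z ^ 2 := by
  rw [myEformula p hpc H hH E hE hρ hr, intervalIntegral.integral_symm]
  rw [← intervalIntegral.integral_neg]
  congr 1
  apply intervalIntegral.integral_congr
  intro z _
  ring

lemma myE0 (p : ℝ → ℝ) (hpc : ContinuousOn p (Set.Ioi 0))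
    (H : ℝ → ℝ) (hH : ∀ ρ, H ρ = ρ * ∫ z in (1:ℝ)..ρ, p z / z ^ 2)
    (E : ℝ → ℝ → ℝ)
    (hE : ∀ ρ r, E ρ r = H ρ - deriv H r * (ρ - r) - H r)
    {r : ℝ} (hr : 0 < r) :
    E 0 r = p r := by
  rw [hE, hH 0, hH r, myDerivH p hpc H hH hr]
  field_simp
  ring

lemma myFint (f : ℝ → ℝ) (hf : ContinuousOn f (Set.Ioi 0)) {x y : ℝ} (hx : 0 < x) (hy : 0 < y) :
    IntervalIntegrable (fun z : ℝ => f z / z ^ 2) MeasureTheory.volume x y :=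
  (((hf.div (continuousOn_pow 2) (fun z hz => pow_ne_zero 2 (ne_of_gt hz))).mono
    (myUIccIoi hx hy))).intervalIntegrable

lemma myKey (f : ℝ → ℝ) (hf : ContinuousOn f (Set.Ioi 0)) (δ : ℝ) {x y : ℝ}
    (hx : 0 < x) (hxy : x ≤ y) (hδ : ∀ z ∈ Set.Icc x y, δ ≤ f z) :
    δ * (x⁻¹ - y⁻¹) ≤ ∫ z in x..y, f z / z ^ 2 := by
  have hy : 0 < y := lt_of_lt_of_le hx hxy
  have h1 : δ * (x⁻¹ - y⁻¹) = ∫ z in x..y, δ * (z ^ 2)⁻¹ := by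
    rw [intervalIntegral.integral_const_mul, myIntegralInvSq hx hy]
  rw [h1]
  apply intervalIntegral.integral_mono_on hxy
    (((myContInvSq.mono (myUIccIoi hx hy)).intervalIntegrable).const_mul δ)
    (myFint f hf hx hy)
  intro z hz
  have hz0 : 0 < z := lt_of_lt_of_le hx hz.1
  rw [div_eq_mul_inv]
  exact mul_le_mul_of_nonneg_right (hδ z hz) (by positivity)

/-- drop the head `[x,m]` where the integrand is nonneg -/
lemma mySplit (f : ℝ → ℝ) (hf : ContinuousOn f (Set.Ioi 0)) {x m y : ℝ}
    (hx : 0 < x) (hxm : x ≤ m) (hmy : m ≤ y) (hnn : ∀ z ∈ Set.Icc x m, 0 ≤ f z) :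
    (∫ z in m..y, f z / z ^ 2) ≤ ∫ z in x..y, f z / z ^ 2 := by
  have hm : 0 < m := lt_of_lt_of_le hx hxm
  have hy : 0 < y := lt_of_lt_of_le hm hmy
  have hadd := intervalIntegral.integral_add_adjacent_intervals
    (myFint f hf hx hm) (myFint f hf hm hy)
  have hnn' : 0 ≤ ∫ z in x..m, f z / z ^ 2 := by
    apply intervalIntegral.integral_nonneg hxm
    intro z hz
    have hz0 : 0 < z := lt_of_lt_of_le hx hz.1
    have := hnn z hz
    positivity
  linarith

/-- drop the tail `[m,y]` where the integrand is nonneg -/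
lemma mySplit' (f : ℝ → ℝ) (hf : ContinuousOn f (Set.Ioi 0)) {x m y : ℝ}
    (hx : 0 < x) (hxm : x ≤ m) (hmy : m ≤ y) (hnn : ∀ z ∈ Set.Icc m y, 0 ≤ f z) :
    (∫ z in x..m, f z / z ^ 2) ≤ ∫ z in x..y, f z / z ^ 2 := by
  have hm : 0 < m := lt_of_lt_of_le hx hxm
  have hy : 0 < y := lt_of_lt_of_le hm hmy
  have hadd := intervalIntegral.integral_add_adjacent_intervals
    (myFint f hf hx hm) (myFint f hf hm hy)
  have hnn' : 0 ≤ ∫ z in m..y, f z / z ^ 2 := by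
    apply intervalIntegral.integral_nonneg hmy
    intro z hz
    have hz0 : 0 < z := lt_of_lt_of_le hm hz.1
    have := hnn z hz
    positivity
  linarith

set_option maxHeartbeats 1000000 in
/-- Residual bound: for `1 ≤ q ≤ γ` there is `c = c(a,b,q) > 0` with
`|ρ − r|^q 1_{ρ ∉ [a/2,2b]} ≤ c E(ρ|r)` for all `ρ ≥ 0`, `r ∈ [a,b]`. -/
theorem relative_energy_residual_bound (p : ℝ → ℝ) (γ pinf : ℝ) (hγ : 1 ≤ γ)
    (hpinf : 0 < pinf)
    (hp2 : ContDiffOn ℝ 2 p (Set.Ioi 0)) (hp1 : ContDiffOn ℝ 1 p (Set.Ici 0))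
    (hp0 : p 0 = 0) (hp' : ∀ ρ ≥ (0:ℝ), 0 < deriv p ρ)
    (hlim : Filter.Tendsto (fun ρ => deriv p ρ / ρ ^ (γ - 1)) Filter.atTop (nhds pinf))
    (H : ℝ → ℝ) (hH : ∀ ρ, H ρ = ρ * ∫ z in (1:ℝ)..ρ, p z / z ^ 2)
    (E : ℝ → ℝ → ℝ)
    (hE : ∀ ρ r, E ρ r = H ρ - deriv H r * (ρ - r) - H r)
    (a b : ℝ) (ha : 0 < a) (hab : a < b)
    (q : ℝ) (hq1 : 1 ≤ q) (hqγ : q ≤ γ) :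
    ∃ c > (0:ℝ), ∀ ρ ≥ (0:ℝ), ∀ r ∈ Set.Icc a b,
      |ρ - r| ^ q * (if ρ ∈ Set.Icc (a / 2) (2 * b) then (0:ℝ) else 1)
        ≤ c * E ρ r := by
  have hb : 0 < b := lt_trans ha hab
  have hpc : ContinuousOn p (Set.Ioi 0) := hp1.continuousOn.mono Set.Ioi_subset_Ici_self
  have hmono : StrictMonoOn p (Set.Ici 0) := by
    apply strictMonoOn_of_deriv_pos (convex_Ici 0) hp1.continuousOn
    intro x hx
    rw [interior_Ici] at hx
    exact hp' x (le_of_lt hx)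
  have hple : ∀ x y : ℝ, 0 ≤ x → x ≤ y → p x ≤ p y := fun x y hx hxy =>
    hmono.monotoneOn (Set.mem_Ici.mpr hx) (Set.mem_Ici.mpr (le_trans hx hxy)) hxy
  have hplt : ∀ x y : ℝ, 0 ≤ x → x < y → p x < p y := fun x y hx hxy =>
    hmono (Set.mem_Ici.mpr hx) (Set.mem_Ici.mpr (le_of_lt (lt_of_le_of_lt hx hxy))) hxy
  obtain ⟨M, hM⟩ : ∃ M : ℝ, ∀ z ≥ M, pinf / 2 ≤ deriv p z / z ^ (γ - 1) := by
    have h2 : pinf / 2 < pinf := by linarith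
    exact Filter.eventually_atTop.mp (hlim.eventually (eventually_ge_nhds h2))
  obtain ⟨Ms, hMsdef⟩ : ∃ x : ℝ, x = max M (max (2 * b) 1) := ⟨_, rfl⟩
  have hMs2b : 2 * b ≤ Ms := hMsdef ▸ le_trans (le_max_left _ _) (le_max_right _ _)
  have hMs1 : (1:ℝ) ≤ Ms := hMsdef ▸ le_trans (le_max_right _ _) (le_max_right _ _)
  have hMs0 : 0 < Ms := lt_of_lt_of_le one_pos hMs1
  have hMderiv : ∀ z, Ms ≤ z → pinf / 2 * z ^ (γ - 1) ≤ deriv p z := by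
    intro z hz
    have hz0 : 0 < z := lt_of_lt_of_le hMs0 hz
    have h := hM z (le_trans (le_max_left _ _) (hMsdef ▸ hz))
    have hzp : 0 < z ^ (γ - 1) := Real.rpow_pos_of_pos hz0 _
    rw [le_div_iff₀ hzp] at h
    linarith
  obtain ⟨δ₁, hδ₁⟩ : ∃ x : ℝ, x = p a - p (3 * a / 4) := ⟨_, rfl⟩
  have hδ₁pos : 0 < δ₁ := hδ₁ ▸ sub_pos.mpr (hplt _ _ (by linarith) (by linarith))
  obtain ⟨δ₂, hδ₂⟩ : ∃ x : ℝ, x = p (3 * b / 2) - p b := ⟨_, rfl⟩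
  have hδ₂pos : 0 < δ₂ := hδ₂ ▸ sub_pos.mpr (hplt _ _ (by linarith) (by linarith))
  have hpa : 0 < p a := by have := hplt 0 a le_rfl ha; rwa [hp0] at this
  obtain ⟨ε₁, hε₁⟩ : ∃ x : ℝ, x = min (p a) (δ₁ / 3) := ⟨_, rfl⟩
  have hε₁pos : 0 < ε₁ := hε₁ ▸ lt_min hpa (div_pos hδ₁pos (by norm_num))
  obtain ⟨M₂, hM₂⟩ : ∃ x : ℝ, x = 4 * Ms := ⟨_, rfl⟩
  have hM₂1 : (1:ℝ) ≤ M₂ := by rw [hM₂]; linarith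
  have hγ0 : 0 < γ := by linarith
  have h2γ : 0 < (2:ℝ) ^ γ := Real.rpow_pos_of_pos two_pos γ
  have hbq : 0 < b ^ q := Real.rpow_pos_of_pos hb q
  have hM₂q : 0 < M₂ ^ q := Real.rpow_pos_of_pos (by linarith) q
  obtain ⟨c₁, hc₁⟩ : ∃ x : ℝ, x = b ^ q / ε₁ := ⟨_, rfl⟩
  obtain ⟨c₂, hc₂⟩ : ∃ x : ℝ, x = M₂ ^ q / (δ₂ / 3) := ⟨_, rfl⟩
  obtain ⟨c₃, hc₃⟩ : ∃ x : ℝ, x = 4 * γ * (2:ℝ) ^ γ / pinf := ⟨_, rfl⟩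
  have hc₁pos : 0 < c₁ := hc₁ ▸ div_pos hbq hε₁pos
  have hc₂pos : 0 < c₂ := hc₂ ▸ div_pos hM₂q (div_pos hδ₂pos (by norm_num))
  have hc₃pos : 0 < c₃ := hc₃ ▸ div_pos (by positivity) hpinf
  refine ⟨c₁ + c₂ + c₃, by linarith, ?_⟩
  intro ρ hρ0 r hr
  obtain ⟨hra, hrb⟩ := hr
  have hr0 : 0 < r := lt_of_lt_of_le ha hra
  have hEnn : 0 ≤ E ρ r := by
    rcases eq_or_lt_of_le hρ0 with h0 | hρpos
    · rw [← h0, myE0 p hpc H hH E hE hr0]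
      have := hplt 0 r le_rfl hr0
      linarith [hp0 ▸ this]
    · rcases le_total r ρ with hrρ | hρr
      · rw [myEformula p hpc H hH E hE hρpos hr0]
        apply mul_nonneg (le_of_lt hρpos)
        apply intervalIntegral.integral_nonneg hrρ
        intro z hz
        have hz0 : 0 < z := lt_of_lt_of_le hr0 hz.1
        exact div_nonneg (by linarith [hple r z (le_of_lt hr0) hz.1]) (by positivity)
      · rw [myEformula' p hpc H hH E hE hρpos hr0]
        apply mul_nonneg (le_of_lt hρpos)
        apply intervalIntegral.integral_nonneg hρr
        intro z hz
        have hz0 : 0 < z := lt_of_lt_of_le hρpos hz.1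
        exact div_nonneg (by linarith [hple z r (le_of_lt hz0) hz.2]) (by positivity)
  split_ifs with hmem
  · rw [mul_zero]
    exact mul_nonneg (by linarith) hEnn
  · rw [mul_one]
    rw [Set.mem_Icc] at hmem
    push_neg at hmem
    by_cases hA : ρ < a / 2
    · -- Region A : 0 ≤ ρ < a/2
      have hLHS : |ρ - r| ^ q ≤ b ^ q := by
        rw [abs_sub_comm, abs_of_nonneg (by linarith)]
        exact Real.rpow_le_rpow (by linarith) (by linarith) (by linarith)
      have hEε : ε₁ ≤ E ρ r := by
        rcases eq_or_lt_of_le hρ0 with h0 | hρpos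
        · rw [← h0, myE0 p hpc H hH E hE hr0]
          exact le_trans (hε₁ ▸ min_le_left (p a) (δ₁/3)) (hple a r (le_of_lt ha) hra)
        · have hform := myEformula' p hpc H hH E hE hρpos hr0
          have hfc : ContinuousOn (fun z => p r - p z) (Set.Ioi 0) :=
            continuousOn_const.sub hpc
          have h3a4 : (0:ℝ) < 3 * a / 4 := by linarith
          have hstep1 : (∫ z in ρ..(3*a/4), (p r - p z) / z ^ 2)
              ≤ ∫ z in ρ..r, (p r - p z) / z ^ 2 := by
            apply mySplit' _ hfc hρpos (by linarith) (by linarith)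
            intro z hz
            exact sub_nonneg.mpr (hple z r (by linarith [hz.1]) hz.2)
          have hstep2 : δ₁ * (ρ⁻¹ - (3*a/4)⁻¹) ≤ ∫ z in ρ..(3*a/4), (p r - p z) / z ^ 2 := by
            apply myKey _ hfc δ₁ hρpos (by linarith)
            intro z hz
            have h1 : p z ≤ p (3 * a / 4) := hple z _ (by linarith [hz.1]) hz.2
            have h2 : p a ≤ p r := hple a r (le_of_lt ha) hra
            rw [hδ₁]; linarith
          have hE2 : ρ * (δ₁ * (ρ⁻¹ - (3*a/4)⁻¹)) ≤ E ρ r := by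
            rw [hform]
            exact mul_le_mul_of_nonneg_left (le_trans hstep2 hstep1) (le_of_lt hρpos)
          have heq : ρ * (δ₁ * (ρ⁻¹ - (3*a/4)⁻¹)) = δ₁ * (1 - ρ * (3*a/4)⁻¹) := by
            field_simp
          have hb23 : ρ * (3*a/4)⁻¹ ≤ 2/3 := by
            rw [← div_eq_mul_inv, div_le_iff₀ h3a4]
            linarith
          have hfin : δ₁ / 3 ≤ ρ * (δ₁ * (ρ⁻¹ - (3*a/4)⁻¹)) := by
            rw [heq]
            nlinarith [mul_nonneg hδ₁pos.le (sub_nonneg.mpr hb23)]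
          exact le_trans (le_trans (hε₁ ▸ min_le_right (p a) (δ₁/3)) hfin) hE2
      calc |ρ - r| ^ q ≤ b ^ q := hLHS
        _ = c₁ * ε₁ := by rw [hc₁, div_mul_cancel₀ _ (ne_of_gt hε₁pos)]
        _ ≤ c₁ * E ρ r := mul_le_mul_of_nonneg_left hEε (le_of_lt hc₁pos)
        _ ≤ (c₁ + c₂ + c₃) * E ρ r :=
          mul_le_mul_of_nonneg_right (by linarith) hEnn
    · -- Region B : ρ > 2b
      have h2bρ : 2 * b < ρ := hmem (not_lt.mp hA)
      have hρpos : 0 < ρ := by linarith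
      have habs : |ρ - r| = ρ - r := abs_of_nonneg (by linarith)
      have hform := myEformula p hpc H hH E hE hρpos hr0
      have hfc : ContinuousOn (fun z => p z - p r) (Set.Ioi 0) := hpc.sub continuousOn_const
      by_cases hBM : ρ ≤ M₂
      · -- Region B1 : 2b < ρ ≤ M₂
        have hE2 : δ₂ / 3 ≤ E ρ r := by
          have h3b2 : (0:ℝ) < 3 * b / 2 := by linarith
          have hstep1 : (∫ z in (3*b/2)..ρ, (p z - p r) / z ^ 2)
              ≤ ∫ z in r..ρ, (p z - p r) / z ^ 2 :=
            mySplit _ hfc hr0 (by linarith) (by linarith)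
              (fun z hz => sub_nonneg.mpr (hple r z (le_of_lt hr0) hz.1))
          have hstep2 : δ₂ * ((3*b/2)⁻¹ - ρ⁻¹) ≤ ∫ z in (3*b/2)..ρ, (p z - p r) / z ^ 2 := by
            apply myKey _ hfc δ₂ h3b2 (by linarith)
            intro z hz
            have h1 : p (3 * b / 2) ≤ p z := hple _ z (by linarith) hz.1
            have h2 : p r ≤ p b := hple r b (le_of_lt hr0) hrb
            rw [hδ₂]; linarith
          have hE3 : ρ * (δ₂ * ((3*b/2)⁻¹ - ρ⁻¹)) ≤ E ρ r := by
            rw [hform]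
            exact mul_le_mul_of_nonneg_left (le_trans hstep2 hstep1) (le_of_lt hρpos)
          have heq : ρ * (δ₂ * ((3*b/2)⁻¹ - ρ⁻¹)) = δ₂ * (ρ * (3*b/2)⁻¹ - 1) := by
            field_simp
          have h43 : 4/3 ≤ ρ * (3*b/2)⁻¹ := by
            rw [← div_eq_mul_inv, le_div_iff₀ h3b2]
            linarith
          rw [heq] at hE3
          have : δ₂ / 3 ≤ δ₂ * (ρ * (3*b/2)⁻¹ - 1) := by
            nlinarith [mul_nonneg hδ₂pos.le (sub_nonneg.mpr h43)]
          linarith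
        have hLHS : |ρ - r| ^ q ≤ M₂ ^ q := by
          rw [habs]
          exact Real.rpow_le_rpow (by linarith) (by linarith) (by linarith)
        calc |ρ - r| ^ q ≤ M₂ ^ q := hLHS
          _ = c₂ * (δ₂ / 3) := by rw [hc₂, div_mul_cancel₀ _ (ne_of_gt (div_pos hδ₂pos (by norm_num : (0:ℝ) < 3)))]
          _ ≤ c₂ * E ρ r := mul_le_mul_of_nonneg_left hE2 (le_of_lt hc₂pos)
          _ ≤ (c₁ + c₂ + c₃) * E ρ r :=
            mul_le_mul_of_nonneg_right (by linarith) hEnn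
      · -- Region B2 : ρ > M₂
        push_neg at hBM
        have hρ2 : 0 < ρ / 2 := by linarith
        have hM₂Ms : M₂ = 4 * Ms := hM₂
        have hMsρ2 : Ms ≤ ρ / 2 := by
          have := hBM; rw [hM₂Ms] at this; linarith
        have hdp_cont : ContinuousOn (deriv p) (Set.Ioi 0) :=
          hp2.continuousOn_deriv_of_isOpen isOpen_Ioi (by norm_num)
        have hsub : Set.uIcc Ms (ρ/2) ⊆ Set.Ioi 0 := myUIccIoi hMs0 hρ2
        have hftc : ∫ z in Ms..(ρ/2), deriv p z = p (ρ/2) - p Ms := by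
          apply intervalIntegral.integral_deriv_eq_sub
          · intro z hz
            have hz0 : (0:ℝ) < z := hsub hz
            exact ((hp2.differentiableOn (by norm_num)) z hz0).differentiableAt
              (isOpen_Ioi.mem_nhds hz0)
          · exact (hdp_cont.mono hsub).intervalIntegrable
        have hrpow_cont : ContinuousOn (fun z : ℝ => z ^ (γ - 1)) (Set.Ioi 0) := by
          intro z hz
          exact (Real.continuousAt_rpow_const z (γ - 1)
            (Or.inl (ne_of_gt hz))).continuousWithinAt
        have hmono2 : (∫ z in Ms..(ρ/2), pinf / 2 * z ^ (γ - 1))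
            ≤ ∫ z in Ms..(ρ/2), deriv p z := by
          apply intervalIntegral.integral_mono_on hMsρ2
            (((hrpow_cont.mono hsub).intervalIntegrable).const_mul _)
            ((hdp_cont.mono hsub).intervalIntegrable)
          intro z hz
          exact hMderiv z hz.1
        have hintr : (∫ z in Ms..(ρ/2), pinf / 2 * z ^ (γ - 1))
            = pinf / 2 * (((ρ/2) ^ γ - Ms ^ γ) / γ) := by
          rw [intervalIntegral.integral_const_mul]
          congr 1
          rw [integral_rpow (Or.inl (by linarith : (-1:ℝ) < γ - 1))]
          rw [show γ - 1 + 1 = γ by ring]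
        have h1 : Ms ^ γ ≤ (ρ/4) ^ γ :=
          Real.rpow_le_rpow (le_of_lt hMs0) (by linarith) (by linarith)
        have h2 : (ρ/4 : ℝ) ^ γ = (ρ/2) ^ γ * (1/2 : ℝ) ^ γ := by
          rw [← Real.mul_rpow (by linarith) (by norm_num)]
          congr 1
          ring
        have h3 : ((1:ℝ)/2) ^ γ ≤ 1/2 := by
          have := Real.rpow_le_rpow_of_exponent_ge (by norm_num : (0:ℝ) < 1/2)
            (by norm_num) hγ
          rwa [Real.rpow_one] at this
        have hρ2γpos : 0 < (ρ/2) ^ γ := Real.rpow_pos_of_pos hρ2 γ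
        have h4 : Ms ^ γ ≤ (ρ/2) ^ γ / 2 := by
          calc Ms ^ γ ≤ (ρ/2) ^ γ * ((1:ℝ)/2) ^ γ := by rw [← h2]; exact h1
            _ ≤ (ρ/2) ^ γ * (1/2) := mul_le_mul_of_nonneg_left h3 (le_of_lt hρ2γpos)
            _ = (ρ/2) ^ γ / 2 := by ring
        have hgrow : pinf / (4 * γ) * (ρ/2) ^ γ ≤ p (ρ/2) - p Ms := by
          rw [← hftc]
          refine le_trans ?_ hmono2
          rw [hintr]
          rw [show pinf / (4 * γ) * (ρ/2) ^ γ = pinf / 2 * ((ρ/2) ^ γ / 2 / γ) by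
            field_simp; ring]
          apply mul_le_mul_of_nonneg_left _ (by positivity)
          rw [div_le_div_iff_of_pos_right hγ0]
          linarith
        have hstep1 : (∫ z in (ρ/2)..ρ, (p z - p r) / z ^ 2)
            ≤ ∫ z in r..ρ, (p z - p r) / z ^ 2 := by
          apply mySplit _ hfc hr0 (by linarith) (by linarith)
          exact fun z hz => sub_nonneg.mpr (hple r z (le_of_lt hr0) hz.1)
        have hstep2 : (p (ρ/2) - p b) * ((ρ/2)⁻¹ - ρ⁻¹)
            ≤ ∫ z in (ρ/2)..ρ, (p z - p r) / z ^ 2 := by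
          apply myKey _ hfc _ hρ2 (by linarith)
          intro z hz
          have h5 : p (ρ/2) ≤ p z := hple _ z (le_of_lt hρ2) hz.1
          have h6 : p r ≤ p b := hple r b (le_of_lt hr0) hrb
          linarith
        have hE3 : ρ * ((p (ρ/2) - p b) * ((ρ/2)⁻¹ - ρ⁻¹)) ≤ E ρ r := by
          rw [hform]
          exact mul_le_mul_of_nonneg_left (le_trans hstep2 hstep1) (le_of_lt hρpos)
        have heq : ρ * ((p (ρ/2) - p b) * ((ρ/2)⁻¹ - ρ⁻¹)) = p (ρ/2) - p b := by
          field_simp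
          ring
        have hpbMs : p b ≤ p Ms := hple b Ms (le_of_lt hb) (by linarith)
        have hEfin : pinf / (4 * γ) * (ρ/2) ^ γ ≤ E ρ r := by
          rw [heq] at hE3
          linarith
        have hρ1 : (1:ℝ) ≤ ρ := le_trans hM₂1 (le_of_lt hBM)
        have hLHS : |ρ - r| ^ q ≤ ρ ^ γ := by
          rw [habs]
          calc (ρ - r) ^ q ≤ ρ ^ q :=
              Real.rpow_le_rpow (by linarith) (by linarith) (by linarith)
            _ ≤ ρ ^ γ := Real.rpow_le_rpow_of_exponent_le hρ1 hqγ
        have h6 : c₃ * (pinf / (4 * γ) * (ρ/2) ^ γ) = ρ ^ γ := by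
          have h5 : (ρ/2) ^ γ = ρ ^ γ / (2:ℝ) ^ γ := Real.div_rpow (by linarith) (by norm_num) γ
          rw [h5, hc₃]
          field_simp [ne_of_gt hpinf, ne_of_gt hγ0, ne_of_gt h2γ]
        calc |ρ - r| ^ q ≤ ρ ^ γ := hLHS
          _ = c₃ * (pinf / (4 * γ) * (ρ/2) ^ γ) := h6.symm
          _ ≤ c₃ * E ρ r := mul_le_mul_of_nonneg_left hEfin (le_of_lt hc₃pos)
          _ ≤ (c₁ + c₂ + c₃) * E ρ r :=
            mul_le_mul_of_nonneg_right (by linarith) hEnn
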